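/- Let m ≥ 1 and let α, β, γ₁, …, γ_m be nonzero complex numbers with γ_k ≠ 1 for all k, β ≠ 1, and α ≠ ∏_k γ_k. Then the sum over all subsets I of {1,…,m} of (−1)^{|I|} · [∏_{j∉I} γ_j · (α − ∏_{i∈I} γ_i)(β − ∏_{i∈I} γ_i)] / [∏_{k=1}^m (γ_k − 1) · (α − ∏_{k=1}^m γ_k)(β − 1)] equals (αβ + (−1)^m ∏_{k=1}^m γ_k) / ((β−1)(α − ∏_{k=1}^m γ_k)). -/
import Mathlib


theorem stmt5 (m : ℕ) (hm : 1 ≤ m) (α β : ℂ) (γ : Fin m → ℂ)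
    (hα0 : α ≠ 0) (hβ0 : β ≠ 0) (hγ0 : ∀ k, γ k ≠ 0)
    (hγ1 : ∀ k, γ k ≠ 1) (hβ1 : β ≠ 1) (hα : α ≠ ∏ k, γ k) :
    ∑ I ∈ (Finset.univ : Finset (Fin m)).powerset,
      (-1 : ℂ) ^ I.card *
        ((∏ j ∈ Iᶜ, γ j) * ((α - ∏ i ∈ I, γ i) * (β - ∏ i ∈ I, γ i))) /
        ((∏ k, (γ k - 1)) * ((α - ∏ k, γ k) * (β - 1)))
      = (α * β + (-1 : ℂ) ^ m * ∏ k, γ k) / ((β - 1) * (α - ∏ k, γ k)) := by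
  classical
  have hQ : (∏ k, (γ k - 1)) ≠ 0 :=
    Finset.prod_ne_zero_iff.mpr (fun k _ => sub_ne_zero.mpr (hγ1 k))
  have hA : α - ∏ k, γ k ≠ 0 := sub_ne_zero.mpr hα
  have hB : β - 1 ≠ 0 := sub_ne_zero.mpr hβ1
  -- S1 : alternating sum of complement products
  have h1 : ∑ I ∈ (Finset.univ : Finset (Fin m)).powerset,
      (-1 : ℂ) ^ I.card * ∏ j ∈ Iᶜ, γ j = ∏ k, (γ k - 1) := by
    have h := Finset.prod_add (fun _ : Fin m => (-1 : ℂ)) γ Finset.univ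
    simp only [Finset.prod_const] at h
    rw [show (∏ k, (γ k - 1)) = ∏ k, ((-1 : ℂ) + γ k) from
      Finset.prod_congr rfl (fun k _ => by ring), h]
    exact Finset.sum_congr rfl fun I _ => by rw [Finset.compl_eq_univ_sdiff]
  -- S2 : alternating sum with full product
  have hz : ∑ I ∈ (Finset.univ : Finset (Fin m)).powerset, (-1 : ℂ) ^ I.card = 0 := by
    have h := Finset.prod_add (fun _ : Fin m => (-1 : ℂ)) (fun _ => (1 : ℂ)) Finset.univ
    simp only [Finset.prod_const, one_pow, mul_one, neg_add_cancel] at h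
    rw [← h, Finset.card_univ, Fintype.card_fin, zero_pow (by omega : m ≠ 0)]
  have h2 : ∑ I ∈ (Finset.univ : Finset (Fin m)).powerset,
      (-1 : ℂ) ^ I.card * ((∏ j ∈ Iᶜ, γ j) * ∏ i ∈ I, γ i) = 0 := by
    calc ∑ I ∈ (Finset.univ : Finset (Fin m)).powerset,
        (-1 : ℂ) ^ I.card * ((∏ j ∈ Iᶜ, γ j) * ∏ i ∈ I, γ i)
        = ∑ I ∈ (Finset.univ : Finset (Fin m)).powerset,
          (-1 : ℂ) ^ I.card * ∏ k, γ k := by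
          refine Finset.sum_congr rfl fun I _ => ?_
          rw [mul_comm (∏ j ∈ Iᶜ, γ j), Finset.prod_mul_prod_compl]
      _ = 0 := by rw [← Finset.sum_mul, hz, zero_mul]
  -- S3 : alternating sum with squared product
  have h3 : ∑ I ∈ (Finset.univ : Finset (Fin m)).powerset,
      (-1 : ℂ) ^ I.card * ((∏ j ∈ Iᶜ, γ j) * (∏ i ∈ I, γ i) ^ 2)
      = (-1 : ℂ) ^ m * (∏ k, γ k) * ∏ k, (γ k - 1) := by
    have h := Finset.prod_add (fun k : Fin m => -(γ k) ^ 2) γ Finset.univ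
    have hL : ∏ k, (-(γ k) ^ 2 + γ k) = (-1 : ℂ) ^ m * (∏ k, γ k) * ∏ k, (γ k - 1) := by
      rw [show (∏ k, (-(γ k) ^ 2 + γ k)) = ∏ k, (-1 * (γ k * (γ k - 1))) from
        Finset.prod_congr rfl (fun k _ => by ring)]
      rw [Finset.prod_mul_distrib, Finset.prod_mul_distrib, Finset.prod_const]
      simp [Finset.card_univ, mul_assoc]
    rw [hL] at h
    rw [h]
    refine (Finset.sum_congr rfl fun I _ => ?_).symm
    rw [show (∏ i ∈ I, -(γ i) ^ 2) = (-1 : ℂ) ^ I.card * (∏ i ∈ I, γ i) ^ 2 by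
      rw [show (∏ i ∈ I, -(γ i) ^ 2) = ∏ i ∈ I, ((-1) * γ i ^ 2) from
        Finset.prod_congr rfl (fun i _ => by ring),
        Finset.prod_mul_distrib, Finset.prod_const, Finset.prod_pow]]
    rw [Finset.compl_eq_univ_sdiff]
    ring
  -- numerator identity
  have key : ∑ I ∈ (Finset.univ : Finset (Fin m)).powerset,
      (-1 : ℂ) ^ I.card *
        ((∏ j ∈ Iᶜ, γ j) * ((α - ∏ i ∈ I, γ i) * (β - ∏ i ∈ I, γ i)))
      = (α * β + (-1 : ℂ) ^ m * ∏ k, γ k) * ∏ k, (γ k - 1) := by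
    have hterm : ∀ I ∈ (Finset.univ : Finset (Fin m)).powerset,
        (-1 : ℂ) ^ I.card *
          ((∏ j ∈ Iᶜ, γ j) * ((α - ∏ i ∈ I, γ i) * (β - ∏ i ∈ I, γ i)))
        = α * β * ((-1 : ℂ) ^ I.card * ∏ j ∈ Iᶜ, γ j)
          - (α + β) * ((-1 : ℂ) ^ I.card * ((∏ j ∈ Iᶜ, γ j) * ∏ i ∈ I, γ i))
          + (-1 : ℂ) ^ I.card * ((∏ j ∈ Iᶜ, γ j) * (∏ i ∈ I, γ i) ^ 2) :=
      fun I _ => by ring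
    rw [Finset.sum_congr rfl hterm, Finset.sum_add_distrib, Finset.sum_sub_distrib,
      ← Finset.mul_sum, ← Finset.mul_sum, h1, h2, h3]
    ring
  rw [← Finset.sum_div, key,
    div_eq_div_iff (mul_ne_zero hQ (mul_ne_zero hA hB)) (mul_ne_zero hB hA)]
  ring
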